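/- Let E be the real symmetric matrix with rows ((2,1,1),(1,2,1),(1,1,2)) (a matrix in the interior of the cone σ_{C₄} spanned by the quadratic forms x₁², x₂², x₃², (x₁+x₂+x₃)²). Fix a complex symmetric 3×3 matrix R and set τ(y) := iyE + R; then τ(y) ∈ ℍ₃ for all sufficiently large y > 0. Set S̃₁ := e^{πi(R₁₂ − R₂₃)} and S̃₂ := e^{πi(R₁₃ − R₂₃)}. Then the limit lim_{y→∞} e^{16πy} · θ_null(τ(y)) exists, and it equals zero if and only if (1 − S̃₁ − S̃₂)(S̃₂ − S̃₁ − 1)(S̃₁ − S̃₂ − 1)(S̃₁ + S̃₂ + 1) = 0. -/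

import Mathlib

open Complex Matrix

/-- The genus-`g` theta function with characteristic `[ε; δ]`. -/
noncomputable def theta (g : ℕ) (ε δ : Fin g → ℤ) (τ : Matrix (Fin g) (Fin g) ℂ)
    (z : Fin g → ℂ) : ℂ :=
  ∑' N : Fin g → ℤ,
    Complex.exp (↑Real.pi * I *
        (∑ j, ∑ k, ((N j : ℂ) + (ε j : ℂ) / 2) * τ j k * ((N k : ℂ) + (ε k : ℂ) / 2)) +
      2 * ↑Real.pi * I *
        (∑ j, ((N j : ℂ) + (ε j : ℂ) / 2) * (z j + (δ j : ℂ) / 2)))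

/-- Membership in the Siegel upper half-space. -/
def SiegelUpper (g : ℕ) (τ : Matrix (Fin g) (Fin g) ℂ) : Prop :=
  τ.IsSymm ∧ (Matrix.of fun j k => (τ j k).im : Matrix (Fin g) (Fin g) ℝ).PosDef

/-- The genus-3 theta-null: the product of all theta constants with even characteristic. -/
noncomputable def thetaNull3 (τ : Matrix (Fin 3) (Fin 3) ℂ) : ℂ :=
  ∏ c ∈ Finset.univ.filter
      (fun c : (Fin 3 → Fin 2) × (Fin 3 → Fin 2) =>
        (∑ j, (c.1 j).val * (c.2 j).val) % 2 = 0),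
    theta 3 (fun j => ((c.1 j).val : ℤ)) (fun j => ((c.2 j).val : ℤ)) τ 0

/-- The matrix generating the interior of the cone `σ_{C₄}`. -/
noncomputable def EC4 : Matrix (Fin 3) (Fin 3) ℂ := !![2, 1, 1; 1, 2, 1; 1, 1, 2]

/-- `S̃₁ = exp(πi(R₁₂ − R₂₃))`, `S̃₂ = exp(πi(R₁₃ − R₂₃))`. -/
noncomputable def St1 (R : Matrix (Fin 3) (Fin 3) ℂ) : ℂ :=
  Complex.exp (↑Real.pi * I * (R 0 1 - R 1 2))

noncomputable def St2 (R : Matrix (Fin 3) (Fin 3) ℂ) : ℂ :=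
  Complex.exp (↑Real.pi * I * (R 0 2 - R 1 2))

namespace Stmt10

open Filter Real

/-! ### Integer helper lemmas -/

lemma sq1 (n : ℤ) : 1 ≤ (2*n+1)^2 := by
  rcases lt_or_ge n 0 with h | h
  · have : n ≤ -1 := by omega
    nlinarith
  · nlinarith

lemma sq9 (n : ℤ) (h0 : n ≠ 0) (h1 : n ≠ -1) : 9 ≤ (2*n+1)^2 := by
  rcases lt_or_ge n (-1) with h | h
  · nlinarith
  · have : 1 ≤ n := by omega
    nlinarith

lemma sq4 (n : ℤ) (h0 : n ≠ 0) : 4 ≤ (2*n)^2 := by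
  rcases lt_or_ge n 0 with h | h
  · nlinarith
  · have : 1 ≤ n := by omega
    nlinarith

lemma absmul (a b s : ℝ) (ha : a^2 ≤ s) (hb : b^2 ≤ s) : |a*b| ≤ s := by
  rw [abs_mul]
  nlinarith [abs_nonneg a, abs_nonneg b, _root_.sq_abs a, _root_.sq_abs b]

/-- `(n + e/2)^2 ≥ |n| - 1` for `e ∈ {0,1}`. -/
lemma vvsq (n e : ℤ) (he : e = 0 ∨ e = 1) : |(n:ℝ)| - 1 ≤ ((n:ℝ) + (e:ℝ)/2)^2 := by
  rcases he with h | h <;> subst h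
  · push_cast
    nlinarith [_root_.sq_abs (n:ℝ), sq_nonneg (|(n:ℝ)| - 1), abs_nonneg (n:ℝ)]
  · push_cast
    have h1 : |(n:ℝ)| ≤ |(n:ℝ) + 1/2| + 1/2 := by
      have := abs_add_le ((n:ℝ) + 1/2) (-(1/2))
      simp at this
      calc |(n:ℝ)| = |(n:ℝ) + 1/2 + (-(1/2))| := by ring_nf
        _ ≤ |(n:ℝ) + 1/2| + |(-(1/2):ℝ)| := abs_add_le _ _
        _ = |(n:ℝ) + 1/2| + 1/2 := by norm_num
    nlinarith [_root_.sq_abs ((n:ℝ) + 1/2), sq_nonneg (|(n:ℝ)+1/2| - 1/2), abs_nonneg ((n:ℝ)+1/2)]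

/-! ### The quadratic form -/

/-- Four times the quadratic form `Q(N + ε/2)` where `Q(v) = ∑ v_j² + (∑ v_j)²`. -/
def Q4 (ε N : Fin 3 → ℤ) : ℤ := (∑ j, (2*N j + ε j)^2) + (∑ j, (2*N j + ε j))^2

lemma Q4_nonneg (ε N : Fin 3 → ℤ) : 0 ≤ Q4 ε N := by
  have : 0 ≤ ∑ j, (2*N j + ε j)^2 := Finset.sum_nonneg fun j _ => sq_nonneg _
  have := sq_nonneg (∑ j, (2*N j + ε j))
  unfold Q4; omega

/-- The real shifted vector. -/
noncomputable def vv (ε N : Fin 3 → ℤ) (j : Fin 3) : ℝ := (N j : ℝ) + (ε j : ℝ)/2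

lemma Q4_cast (ε N : Fin 3 → ℤ) :
    ((Q4 ε N : ℤ) : ℝ) = 4 * ((∑ j, (vv ε N j)^2) + (∑ j, vv ε N j)^2) := by
  unfold Q4 vv
  push_cast
  rw [Fin.sum_univ_three, Fin.sum_univ_three, Fin.sum_univ_three, Fin.sum_univ_three]
  ring

lemma sumsq_le_Q4 (ε N : Fin 3 → ℤ) : ∑ j, (vv ε N j)^2 ≤ ((Q4 ε N : ℤ) : ℝ)/4 := by
  rw [Q4_cast]
  nlinarith [sq_nonneg (∑ j, vv ε N j)]

lemma vvsq_le (ε N : Fin 3 → ℤ) (j : Fin 3) : (vv ε N j)^2 ≤ ∑ k, (vv ε N k)^2 :=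
  Finset.single_le_sum (f := fun k => (vv ε N k)^2) (fun k _ => sq_nonneg _) (Finset.mem_univ j)

lemma Q4_lower (ε N : Fin 3 → ℤ) (hε : ∀ j, ε j = 0 ∨ ε j = 1) :
    (∑ j, |(N j : ℝ)|) - 3 ≤ ((Q4 ε N : ℤ) : ℝ)/4 := by
  have h : ∀ j, |(N j : ℝ)| - 1 ≤ (vv ε N j)^2 := fun j => vvsq (N j) (ε j) (hε j)
  have h2 : (∑ j, (|(N j : ℝ)| - 1)) ≤ ∑ j, (vv ε N j)^2 :=
    Finset.sum_le_sum fun j _ => h j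
  have h3 := sumsq_le_Q4 ε N
  rw [Finset.sum_sub_distrib] at h2
  simp at h2
  linarith

/-! ### Generic double sum bound -/

lemma double_sum_bound (c : Fin 3 → Fin 3 → ℝ) (x : Fin 3 → ℝ) :
    |∑ j, ∑ k, x j * x k * c j k| ≤ (∑ j, ∑ k, |c j k|) * ∑ j, (x j)^2 := by
  have hs : ∀ j : Fin 3, (x j)^2 ≤ ∑ i, (x i)^2 := fun j =>
    Finset.single_le_sum (f := fun i => (x i)^2) (fun i _ => sq_nonneg _) (Finset.mem_univ j)
  calc |∑ j, ∑ k, x j * x k * c j k| ≤ ∑ j, |∑ k, x j * x k * c j k| :=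
        Finset.abs_sum_le_sum_abs _ _
    _ ≤ ∑ j, ∑ k, |x j * x k * c j k| :=
        Finset.sum_le_sum fun j _ => Finset.abs_sum_le_sum_abs _ _
    _ ≤ ∑ j, ∑ k, |c j k| * ∑ i, (x i)^2 := by
        refine Finset.sum_le_sum fun j _ => Finset.sum_le_sum fun k _ => ?_
        rw [abs_mul, mul_comm]
        exact mul_le_mul_of_nonneg_left (absmul _ _ _ (hs j) (hs k)) (abs_nonneg _)
    _ = (∑ j, ∑ k, |c j k|) * ∑ j, (x j)^2 := by
        rw [Finset.sum_mul]
        exact Finset.sum_congr rfl fun j _ => (Finset.sum_mul _ _ _).symm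

/-! ### The theta summand -/

noncomputable def vc (ε N : Fin 3 → ℤ) (j : Fin 3) : ℂ := ((vv ε N j : ℝ) : ℂ)

noncomputable def rrC (R : Matrix (Fin 3) (Fin 3) ℂ) (ε N : Fin 3 → ℤ) : ℂ :=
  ∑ j, ∑ k, vc ε N j * R j k * vc ε N k

noncomputable def ddC (ε δ N : Fin 3 → ℤ) : ℂ := ∑ j, vc ε N j * (δ j : ℂ)

noncomputable def KR (R : Matrix (Fin 3) (Fin 3) ℂ) : ℝ := ∑ j, ∑ k, |(R j k).im|

lemma KR_nonneg (R : Matrix (Fin 3) (Fin 3) ℂ) : 0 ≤ KR R :=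
  Finset.sum_nonneg fun j _ => Finset.sum_nonneg fun k _ => abs_nonneg _

noncomputable def Fsum (R : Matrix (Fin 3) (Fin 3) ℂ) (ε δ : Fin 3 → ℤ) (y : ℝ)
    (N : Fin 3 → ℤ) : ℂ :=
  Complex.exp (↑(-(Real.pi * y * (((Q4 ε N : ℤ) : ℝ)/4))) +
    ↑Real.pi * I * (rrC R ε N + ddC ε δ N))

lemma expo_eq (R : Matrix (Fin 3) (Fin 3) ℂ) (ε δ : Fin 3 → ℤ) (y : ℝ) (N : Fin 3 → ℤ) :
    ↑Real.pi * I *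
        (∑ j, ∑ k, ((N j : ℂ) + (ε j : ℂ) / 2) * ((I * (y : ℂ)) • EC4 + R) j k *
          ((N k : ℂ) + (ε k : ℂ) / 2)) +
      2 * ↑Real.pi * I *
        (∑ j, ((N j : ℂ) + (ε j : ℂ) / 2) * ((0 : Fin 3 → ℂ) j + (δ j : ℂ) / 2)) =
    ↑(-(Real.pi * y * (((Q4 ε N : ℤ) : ℝ)/4))) + ↑Real.pi * I * (rrC R ε N + ddC ε δ N) := by
  unfold rrC ddC vc vv Q4
  have e00 : ((I * (y:ℂ)) • EC4 + R) 0 0 = I * (y:ℂ) * 2 + R 0 0 := by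
    have : ((I * (y:ℂ)) • EC4 + R) 0 0 = I * (y:ℂ) * EC4 0 0 + R 0 0 := rfl
    rw [this]
    norm_num [EC4, Matrix.vecHead, Matrix.vecTail]
  have e01 : ((I * (y:ℂ)) • EC4 + R) 0 1 = I * (y:ℂ) * 1 + R 0 1 := by
    have : ((I * (y:ℂ)) • EC4 + R) 0 1 = I * (y:ℂ) * EC4 0 1 + R 0 1 := rfl
    rw [this]
    norm_num [EC4, Matrix.vecHead, Matrix.vecTail]
  have e02 : ((I * (y:ℂ)) • EC4 + R) 0 2 = I * (y:ℂ) * 1 + R 0 2 := by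
    have : ((I * (y:ℂ)) • EC4 + R) 0 2 = I * (y:ℂ) * EC4 0 2 + R 0 2 := rfl
    rw [this]
    norm_num [EC4, Matrix.vecHead, Matrix.vecTail, Matrix.cons_val_two]
  have e10 : ((I * (y:ℂ)) • EC4 + R) 1 0 = I * (y:ℂ) * 1 + R 1 0 := by
    have : ((I * (y:ℂ)) • EC4 + R) 1 0 = I * (y:ℂ) * EC4 1 0 + R 1 0 := rfl
    rw [this]
    norm_num [EC4, Matrix.vecHead, Matrix.vecTail]
  have e11 : ((I * (y:ℂ)) • EC4 + R) 1 1 = I * (y:ℂ) * 2 + R 1 1 := by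
    have : ((I * (y:ℂ)) • EC4 + R) 1 1 = I * (y:ℂ) * EC4 1 1 + R 1 1 := rfl
    rw [this]
    norm_num [EC4, Matrix.vecHead, Matrix.vecTail]
  have e12 : ((I * (y:ℂ)) • EC4 + R) 1 2 = I * (y:ℂ) * 1 + R 1 2 := by
    have : ((I * (y:ℂ)) • EC4 + R) 1 2 = I * (y:ℂ) * EC4 1 2 + R 1 2 := rfl
    rw [this]
    norm_num [EC4, Matrix.vecHead, Matrix.vecTail, Matrix.cons_val_two]
  have e20 : ((I * (y:ℂ)) • EC4 + R) 2 0 = I * (y:ℂ) * 1 + R 2 0 := by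
    have : ((I * (y:ℂ)) • EC4 + R) 2 0 = I * (y:ℂ) * EC4 2 0 + R 2 0 := rfl
    rw [this]
    norm_num [EC4, Matrix.vecHead, Matrix.vecTail, Matrix.cons_val_two]
  have e21 : ((I * (y:ℂ)) • EC4 + R) 2 1 = I * (y:ℂ) * 1 + R 2 1 := by
    have : ((I * (y:ℂ)) • EC4 + R) 2 1 = I * (y:ℂ) * EC4 2 1 + R 2 1 := rfl
    rw [this]
    norm_num [EC4, Matrix.vecHead, Matrix.vecTail, Matrix.cons_val_two]
  have e22 : ((I * (y:ℂ)) • EC4 + R) 2 2 = I * (y:ℂ) * 2 + R 2 2 := by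
    have : ((I * (y:ℂ)) • EC4 + R) 2 2 = I * (y:ℂ) * EC4 2 2 + R 2 2 := rfl
    rw [this]
    norm_num [EC4, Matrix.vecHead, Matrix.vecTail, Matrix.cons_val_two]
  simp only [Fin.sum_univ_three, Pi.zero_apply, e00, e01, e02, e10, e11, e12, e20, e21, e22]
  push_cast
  linear_combination (↑Real.pi * (y : ℂ) *
    (2*(((N 0 : ℂ) + (ε 0 : ℂ)/2)^2 + ((N 1 : ℂ) + (ε 1 : ℂ)/2)^2 + ((N 2 : ℂ) + (ε 2 : ℂ)/2)^2
      + ((N 0 : ℂ) + (ε 0 : ℂ)/2)*((N 1 : ℂ) + (ε 1 : ℂ)/2)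
      + ((N 0 : ℂ) + (ε 0 : ℂ)/2)*((N 2 : ℂ) + (ε 2 : ℂ)/2)
      + ((N 1 : ℂ) + (ε 1 : ℂ)/2)*((N 2 : ℂ) + (ε 2 : ℂ)/2)))) * Complex.I_sq

lemma theta_eq (R : Matrix (Fin 3) (Fin 3) ℂ) (ε δ : Fin 3 → ℤ) (y : ℝ) :
    theta 3 ε δ ((I * (y : ℂ)) • EC4 + R) 0 = ∑' N, Fsum R ε δ y N := by
  unfold theta Fsum
  exact tsum_congr fun N => by rw [expo_eq]

lemma dd_im (ε δ N : Fin 3 → ℤ) : (ddC ε δ N).im = 0 := by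
  unfold ddC vc
  rw [Complex.im_sum]
  refine Finset.sum_eq_zero fun j _ => ?_
  simp

lemma rr_im_bound (R : Matrix (Fin 3) (Fin 3) ℂ) (ε N : Fin 3 → ℤ) :
    |(rrC R ε N).im| ≤ KR R * (((Q4 ε N : ℤ) : ℝ)/4) := by
  have him : (rrC R ε N).im = ∑ j, ∑ k, vv ε N j * vv ε N k * (R j k).im := by
    unfold rrC vc
    rw [Complex.im_sum]
    refine Finset.sum_congr rfl fun j _ => ?_
    rw [Complex.im_sum]
    refine Finset.sum_congr rfl fun k _ => ?_
    simp [Complex.mul_im, Complex.mul_re]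
    ring
  rw [him]
  calc |∑ j, ∑ k, vv ε N j * vv ε N k * (R j k).im|
      ≤ (∑ j, ∑ k, |(R j k).im|) * ∑ j, (vv ε N j)^2 := double_sum_bound _ _
    _ ≤ KR R * (((Q4 ε N : ℤ) : ℝ)/4) := by
        unfold KR
        exact mul_le_mul_of_nonneg_left (sumsq_le_Q4 ε N) (KR_nonneg R)

lemma norm_Fsum (R : Matrix (Fin 3) (Fin 3) ℂ) (ε δ : Fin 3 → ℤ) (y : ℝ) (N : Fin 3 → ℤ) :
    ‖Fsum R ε δ y N‖ ≤ Real.exp (Real.pi * (KR R - y) * (((Q4 ε N : ℤ) : ℝ)/4)) := by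
  unfold Fsum
  rw [Complex.norm_exp]
  apply Real.exp_le_exp.2
  have hre : (↑(-(Real.pi * y * (((Q4 ε N : ℤ) : ℝ)/4))) +
      ↑Real.pi * I * (rrC R ε N + ddC ε δ N)).re =
      -(Real.pi * y * (((Q4 ε N : ℤ) : ℝ)/4)) - Real.pi * (rrC R ε N).im := by
    simp [Complex.add_re, Complex.mul_re, Complex.mul_im, dd_im]
    ring
  rw [hre]
  have h1 := rr_im_bound R ε N
  have h2 := abs_le.1 h1
  nlinarith [Real.pi_pos]

/-! ### Summability -/

lemma summable_geomexp : Summable (fun n : ℕ => Real.exp (-(n:ℝ))) := by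
  have h := summable_geometric_of_lt_one (le_of_lt (Real.exp_pos (-1)))
    (by rw [Real.exp_lt_one_iff]; norm_num)
  refine h.congr fun n => ?_
  show Real.exp (-1) ^ n = _
  rw [← Real.exp_nat_mul]
  congr 1
  ring

noncomputable def gg (n : ℤ) : ℝ := Real.exp (-|(n : ℝ)|)

lemma summable_gInt : Summable gg := by
  unfold gg
  rw [summable_int_iff_summable_nat_and_neg]
  constructor <;>
  · refine summable_geomexp.congr fun n => ?_
    congr 1
    rw [neg_inj]
    symm
    push_cast
    first
    | simp
    | (rw [abs_neg]; simp)

def e3 : (Fin 3 → ℤ) ≃ ℤ × ℤ × ℤ where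
  toFun N := (N 0, N 1, N 2)
  invFun p := ![p.1, p.2.1, p.2.2]
  left_inv N := by
    funext j
    fin_cases j <;> rfl
  right_inv p := rfl

lemma summable_G : Summable (fun N : Fin 3 → ℤ => ∏ j, Real.exp (-|(N j : ℝ)|)) := by
  have hgpos : ∀ n, 0 ≤ gg n := fun n => (Real.exp_pos _).le
  have h0 : Summable (fun p : ℤ × ℤ => gg p.1 * gg p.2) :=
    Summable.mul_of_nonneg summable_gInt summable_gInt (fun n => hgpos n) (fun n => hgpos n)
  have h0pos : ∀ p : ℤ × ℤ, 0 ≤ gg p.1 * gg p.2 :=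
    fun p => mul_nonneg (hgpos _) (hgpos _)
  have h1 : Summable (fun p : ℤ × ℤ × ℤ => gg p.1 * (gg p.2.1 * gg p.2.2)) :=
    Summable.mul_of_nonneg (g := fun p : ℤ × ℤ => gg p.1 * gg p.2) summable_gInt h0
      (fun n => hgpos n) (fun p => h0pos p)
  have h2 : Summable ((fun p : ℤ × ℤ × ℤ => gg p.1 * (gg p.2.1 * gg p.2.2)) ∘ e3) :=
    (e3.summable_iff).2 h1
  refine h2.congr fun N => ?_
  show gg (N 0) * (gg (N 1) * gg (N 2)) = _
  rw [Fin.prod_univ_three]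
  unfold gg
  ring

/-! ### Global bound and summability of the theta series -/

noncomputable def bigG (N : Fin 3 → ℤ) : ℝ := Real.exp 3 * ∏ j, Real.exp (-|(N j : ℝ)|)

lemma bigG_nonneg (N : Fin 3 → ℤ) : 0 ≤ bigG N := by
  unfold bigG
  positivity

lemma summable_bigG : Summable bigG := summable_G.mul_left _

lemma Fsum_le_bigG (R : Matrix (Fin 3) (Fin 3) ℂ) (ε δ : Fin 3 → ℤ)
    (hε : ∀ j, ε j = 0 ∨ ε j = 1) (y : ℝ) (hy : KR R + 1 ≤ y) (N : Fin 3 → ℤ) :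
    ‖Fsum R ε δ y N‖ ≤ bigG N := by
  have h1 := norm_Fsum R ε δ y N
  have h2 := Q4_lower ε N hε
  have hQ : (0:ℝ) ≤ ((Q4 ε N : ℤ) : ℝ) := by exact_mod_cast Q4_nonneg ε N
  have hπ : (1:ℝ) ≤ Real.pi := by nlinarith [Real.pi_gt_three]
  refine h1.trans ?_
  unfold bigG
  rw [← Real.exp_sum, ← Real.exp_add]
  apply Real.exp_le_exp.2
  have hsn : ∑ j, -|(N j : ℝ)| = -∑ j, |(N j : ℝ)| := by
    rw [← Finset.sum_neg_distrib]
  rw [hsn]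
  nlinarith [mul_nonneg (sub_nonneg.2 hπ) hQ]

lemma summable_Fsum (R : Matrix (Fin 3) (Fin 3) ℂ) (ε δ : Fin 3 → ℤ)
    (hε : ∀ j, ε j = 0 ∨ ε j = 1) (y : ℝ) (hy : KR R + 1 ≤ y) :
    Summable (fun N => Fsum R ε δ y N) :=
  Summable.of_norm_bounded summable_bigG (Fsum_le_bigG R ε δ hε y hy)

lemma summable_norm_Fsum (R : Matrix (Fin 3) (Fin 3) ℂ) (ε δ : Fin 3 → ℤ)
    (hε : ∀ j, ε j = 0 ∨ ε j = 1) (y : ℝ) (hy : KR R + 1 ≤ y) :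
    Summable (fun N => ‖Fsum R ε δ y N‖) :=
  Summable.of_nonneg_of_le (fun N => norm_nonneg _) (Fsum_le_bigG R ε δ hε y hy) summable_bigG

lemma tail_bound (R : Matrix (Fin 3) (Fin 3) ℂ) (ε δ : Fin 3 → ℤ)
    (hε : ∀ j, ε j = 0 ∨ ε j = 1) (m : ℝ) (hm : 0 ≤ m) (N : Fin 3 → ℤ)
    (hN : 4 * m + 1 ≤ ((Q4 ε N : ℤ) : ℝ)) (y : ℝ) (hy : KR R + 1 ≤ y) :
    ‖Fsum R ε δ y N‖ ≤
      Real.exp (-(Real.pi * (y - (KR R + 1)) * (m + 1/4))) * bigG N := by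
  have h1 := norm_Fsum R ε δ y N
  have h2 := Q4_lower ε N hε
  have hQ : (0:ℝ) ≤ ((Q4 ε N : ℤ) : ℝ) := by exact_mod_cast Q4_nonneg ε N
  have hπ : (1:ℝ) ≤ Real.pi := by nlinarith [Real.pi_gt_three]
  have ht : 0 ≤ y - (KR R + 1) := by linarith
  refine h1.trans ?_
  unfold bigG
  rw [← Real.exp_sum, ← Real.exp_add, ← Real.exp_add]
  apply Real.exp_le_exp.2
  have hsn : ∑ j, -|(N j : ℝ)| = -∑ j, |(N j : ℝ)| := by
    rw [← Finset.sum_neg_distrib]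
  rw [hsn]
  nlinarith [mul_nonneg (sub_nonneg.2 hπ) hQ,
    mul_nonneg (mul_nonneg Real.pi_pos.le ht) (by linarith : (0:ℝ) ≤ ((Q4 ε N : ℤ) : ℝ)/4 - (m + 1/4)),
    mul_nonneg (mul_nonneg Real.pi_pos.le ht) (by linarith : (0:ℝ) ≤ m + 1/4)]

/-! ### The master limit lemma -/

lemma master (R : Matrix (Fin 3) (Fin 3) ℂ) (ε δ : Fin 3 → ℤ)
    (hε : ∀ j, ε j = 0 ∨ ε j = 1) (m : ℝ) (hm : 0 ≤ m) (M : Finset (Fin 3 → ℤ))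
    (h1 : ∀ N ∈ M, ((Q4 ε N : ℤ) : ℝ) = 4 * m)
    (h2 : ∀ N ∉ M, 4 * m + 1 ≤ ((Q4 ε N : ℤ) : ℝ)) :
    Filter.Tendsto (fun y : ℝ => ((Real.exp (Real.pi * m * y) : ℝ) : ℂ) *
        theta 3 ε δ ((I * (y : ℂ)) • EC4 + R) 0) Filter.atTop
      (nhds (∑ N ∈ M, Complex.exp (↑Real.pi * I * (rrC R ε N + ddC ε δ N)))) := by
  classical
  set y₀ := KR R + 1 with hy₀def
  set A := ∑ N ∈ M, Complex.exp (↑Real.pi * I * (rrC R ε N + ddC ε δ N)) with hA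
  set CG := ∑' N, bigG N with hCG
  have hCG0 : 0 ≤ CG := tsum_nonneg bigG_nonneg
  -- the tail function
  set T : ℝ → ℂ := fun y => ((Real.exp (Real.pi * m * y) : ℝ) : ℂ) *
    ∑' N : {N // N ∉ M}, Fsum R ε δ y (N : Fin 3 → ℤ) with hT
  -- decomposition for large y
  have hdec : ∀ y : ℝ, y₀ ≤ y →
      ((Real.exp (Real.pi * m * y) : ℝ) : ℂ) * theta 3 ε δ ((I * (y : ℂ)) • EC4 + R) 0
        = A + T y := by
    intro y hy
    have hsum := summable_Fsum R ε δ hε y hy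
    have hsplit := Summable.sum_add_tsum_subtype_compl hsum M
    rw [theta_eq, ← hsplit, mul_add, hT]
    congr 1
    rw [Finset.mul_sum, hA]
    refine Finset.sum_congr rfl fun N hN => ?_
    unfold Fsum
    rw [Complex.ofReal_exp, ← Complex.exp_add]
    congr 1
    rw [h1 N hN]
    push_cast
    ring
  -- the tail tends to zero
  have htail : Filter.Tendsto T Filter.atTop (nhds 0) := by
    apply squeeze_zero_norm' (a := fun y =>
      (CG * Real.exp (Real.pi * m * y₀ + (Real.pi/4) * y₀)) * Real.exp (-(Real.pi/4 * y)))
    · filter_upwards [Filter.eventually_ge_atTop y₀] with y hy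
      have hsub : Summable (fun N : {N // N ∉ M} => Fsum R ε δ y (N : Fin 3 → ℤ)) :=
        (summable_Fsum R ε δ hε y hy).subtype _
      have hsubn : Summable (fun N : {N // N ∉ M} => ‖Fsum R ε δ y (N : Fin 3 → ℤ)‖) :=
        (summable_norm_Fsum R ε δ hε y hy).subtype _
      have hbigsub : Summable (fun N : {N // N ∉ M} => bigG (N : Fin 3 → ℤ)) :=
        summable_bigG.subtype _
      have step1 : ‖T y‖ ≤ Real.exp (Real.pi * m * y) *
          ∑' N : {N // N ∉ M}, ‖Fsum R ε δ y (N : Fin 3 → ℤ)‖ := by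
        rw [hT]
        simp only [norm_mul, Complex.norm_real, Real.norm_eq_abs,
          abs_of_pos (Real.exp_pos _)]
        exact mul_le_mul_of_nonneg_left (norm_tsum_le_tsum_norm hsubn) (Real.exp_pos _).le
      have step2 : ∑' N : {N // N ∉ M}, ‖Fsum R ε δ y (N : Fin 3 → ℤ)‖ ≤
          Real.exp (-(Real.pi * (y - y₀) * (m + 1/4))) * ∑' N : {N // N ∉ M}, bigG (N : Fin 3 → ℤ) := by
        rw [← tsum_mul_left]
        refine Summable.tsum_le_tsum (fun N => ?_) hsubn (hbigsub.mul_left _)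
        exact tail_bound R ε δ hε m hm N (h2 N N.2) y hy
      have step3 : ∑' N : {N // N ∉ M}, bigG (N : Fin 3 → ℤ) ≤ CG := by
        refine Summable.tsum_le_tsum_of_inj (Subtype.val) Subtype.val_injective
          (fun N _ => bigG_nonneg N) (fun N => le_refl _) hbigsub summable_bigG
      have hexp0 : (0:ℝ) ≤ Real.exp (-(Real.pi * (y - y₀) * (m + 1/4))) := (Real.exp_pos _).le
      have : ‖T y‖ ≤ Real.exp (Real.pi * m * y) *
          (Real.exp (-(Real.pi * (y - y₀) * (m + 1/4))) * CG) := by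
        refine step1.trans ?_
        refine mul_le_mul_of_nonneg_left ?_ (Real.exp_pos _).le
        exact step2.trans (mul_le_mul_of_nonneg_left step3 hexp0)
      refine this.trans (le_of_eq ?_)
      have hh1 : Real.exp (Real.pi * m * y) *
          (Real.exp (-(Real.pi * (y - y₀) * (m + 1/4))) * CG)
          = CG * Real.exp (Real.pi * m * y + -(Real.pi * (y - y₀) * (m + 1/4))) := by
        rw [Real.exp_add]; ring
      have hh2 : (CG * Real.exp (Real.pi * m * y₀ + (Real.pi/4) * y₀)) *
          Real.exp (-(Real.pi/4 * y))
          = CG * Real.exp ((Real.pi * m * y₀ + (Real.pi/4) * y₀) + -(Real.pi/4 * y)) := by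
        rw [mul_assoc, ← Real.exp_add]
      rw [hh1, hh2]
      congr 1
      ring
    · have hcomp : Filter.Tendsto (fun y : ℝ => Real.exp (-(Real.pi/4 * y)))
          Filter.atTop (nhds 0) :=
        Real.tendsto_exp_neg_atTop_nhds_zero.comp
          (Filter.Tendsto.const_mul_atTop (by positivity) Filter.tendsto_id)
      simpa using tendsto_const_nhds.mul hcomp
  have := (tendsto_const_nhds (x := A) (f := Filter.atTop (α := ℝ))).add htail
  rw [add_zero] at this
  refine this.congr' ?_
  filter_upwards [Filter.eventually_ge_atTop y₀] with y hy
  exact (hdec y hy).symm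

/-! ### Characteristics -/

def w2 (ε : Fin 3 → Fin 2) : ℕ := (∑ j, (ε j).val + 1)/2

def εZ (ε : Fin 3 → Fin 2) : Fin 3 → ℤ := fun j => ((ε j).val : ℤ)

def cand (ε : Fin 3 → Fin 2) : Finset (Fin 3 → ℤ) :=
  Finset.image (fun s : Fin 3 → Fin 2 => fun j => if ε j = 0 then 0 else -((s j).val : ℤ))
    Finset.univ

def MM (ε : Fin 3 → Fin 2) : Finset (Fin 3 → ℤ) :=
  (cand ε).filter (fun N => Q4 (εZ ε) N = 2 * (w2 ε : ℤ))

noncomputable def limChar (R : Matrix (Fin 3) (Fin 3) ℂ)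
    (c : (Fin 3 → Fin 2) × (Fin 3 → Fin 2)) : ℂ :=
  ∑ N ∈ MM c.1, Complex.exp (↑Real.pi * I * (rrC R (εZ c.1) N + ddC (εZ c.1) (εZ c.2) N))

lemma mem_cand {ε : Fin 3 → Fin 2} {N : Fin 3 → ℤ} :
    N ∈ cand ε ↔ ∀ j, (ε j = 0 → N j = 0) ∧ (ε j ≠ 0 → N j = 0 ∨ N j = -1) := by
  constructor
  · intro h j
    obtain ⟨s, _, rfl⟩ := Finset.mem_image.1 h
    constructor
    · intro he
      simp [he]
    · intro he
      simp [he]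
      have := (s j).isLt
      omega
  · intro h
    refine Finset.mem_image.2 ⟨fun j => if N j = -1 then 1 else 0, Finset.mem_univ _, ?_⟩
    funext j
    by_cases he : ε j = 0
    · simp [he, (h j).1 he]
    · rcases (h j).2 he with h0 | h0 <;> simp [he, h0]

lemma gap (ε : Fin 3 → Fin 2) (N : Fin 3 → ℤ) (hN : N ∉ MM ε) :
    2 * (w2 ε : ℤ) + 1 ≤ Q4 (εZ ε) N := by
  classical
  set Sn : ℕ := ∑ j, (ε j).val with hSn
  set t : Fin 3 → ℤ := fun j => 2 * N j + ((ε j).val : ℤ) with ht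
  have hev : ∀ j, ((ε j).val : ℤ) = 0 ∨ ((ε j).val : ℤ) = 1 := fun j => by
    have := (ε j).isLt; omega
  have hw : 2 * (w2 ε : ℤ) = (Sn : ℤ) + (Sn : ℤ) % 2 := by
    have h1 : 2 * w2 ε = Sn + Sn % 2 := by unfold w2; omega
    have h2 : ((Sn % 2 : ℕ) : ℤ) = (Sn : ℤ) % 2 := by push_cast; ring
    omega
  have hQ4 : Q4 (εZ ε) N = (∑ j, (t j)^2) + (∑ j, t j)^2 := rfl
  have hsumt : ∑ j, t j = 2 * (∑ j, N j) + (Sn : ℤ) := by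
    rw [ht, hSn]
    push_cast
    rw [Fin.sum_univ_three, Fin.sum_univ_three, Fin.sum_univ_three]
    ring
  have hpar : (∑ j, t j) % 2 = (Sn : ℤ) % 2 := by omega
  have hparsq : (Sn : ℤ) % 2 ≤ (∑ j, t j)^2 := by
    have h01 : (Sn : ℤ) % 2 = 0 ∨ (Sn : ℤ) % 2 = 1 := by omega
    rcases h01 with h | h
    · rw [h]; exact sq_nonneg _
    · obtain ⟨k, hk⟩ : ∃ k, ∑ j, t j = 2 * k + 1 := ⟨(∑ j, t j)/2, by omega⟩
      rw [h, hk]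
      exact sq1 k
  have he0iff : ∀ i : Fin 2, (i = 0 ↔ (i.val : ℤ) = 0) := by decide
  by_cases hall : ∀ j, (ε j = 0 → N j = 0) ∧ (ε j ≠ 0 → N j = 0 ∨ N j = -1)
  · have hc : N ∈ cand ε := mem_cand.2 hall
    have hne : Q4 (εZ ε) N ≠ 2 * (w2 ε : ℤ) := fun h => hN (Finset.mem_filter.2 ⟨hc, h⟩)
    have hsq : ∀ j, (t j)^2 = ((ε j).val : ℤ) := by
      intro j
      rcases hev j with h | h
      · have he : ε j = 0 := (he0iff (ε j)).2 h
        rw [ht]; simp only []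
        rw [(hall j).1 he, h]; ring
      · have he : ε j ≠ 0 := fun h0 => by rw [(he0iff (ε j)).1 h0] at h; omega
        rcases (hall j).2 he with h0 | h0 <;> (rw [ht]; simp only []; rw [h0, h]; ring)
    have hsum : ∑ j, (t j)^2 = (Sn : ℤ) := by
      rw [Finset.sum_congr rfl fun j _ => hsq j, hSn]
      push_cast
      rfl
    have husq : (∑ j, t j)^2 ≠ (Sn : ℤ) % 2 := by
      intro h
      apply hne
      rw [hQ4, hsum, h, hw]
    have h3 : (Sn : ℤ) % 2 + 3 ≤ (∑ j, t j)^2 := by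
      have h01 : (Sn : ℤ) % 2 = 0 ∨ (Sn : ℤ) % 2 = 1 := by omega
      rcases h01 with h | h
      · rw [h] at husq ⊢
        obtain ⟨k, hk⟩ : ∃ k, ∑ j, t j = 2 * k := ⟨(∑ j, t j)/2, by omega⟩
        rw [hk] at husq ⊢
        have hk0 : k ≠ 0 := fun h0 => husq (by rw [h0]; ring)
        have := sq4 k hk0
        linarith
      · rw [h] at husq ⊢
        obtain ⟨k, hk⟩ : ∃ k, ∑ j, t j = 2 * k + 1 := ⟨(∑ j, t j)/2, by omega⟩
        rw [hk] at husq ⊢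
        have hk0 : k ≠ 0 := fun h0 => husq (by rw [h0]; ring)
        have hk1 : k ≠ -1 := fun h0 => husq (by rw [h0]; ring)
        have := sq9 k hk0 hk1
        linarith
    rw [hQ4, hsum, hw]
    linarith
  · push_neg at hall
    obtain ⟨j₀, hj₀⟩ := hall
    have hbig : ((ε j₀).val : ℤ) + 3 ≤ (t j₀)^2 := by
      rcases hev j₀ with h | h
      · have he : ε j₀ = 0 := (he0iff (ε j₀)).2 h
        have hN0 : N j₀ ≠ 0 := by
          intro h0
          exact (hj₀ (fun _ => h0)).1 he
        have h4 := sq4 (N j₀) hN0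
        rw [ht]; simp only []
        rw [h]
        nlinarith
      · have he : ε j₀ ≠ 0 := fun h0 => by rw [(he0iff (ε j₀)).1 h0] at h; omega
        have hN0 : N j₀ ≠ 0 ∧ N j₀ ≠ -1 :=
          ⟨(hj₀ (fun h0' => absurd h0' he)).2.1, (hj₀ (fun h0' => absurd h0' he)).2.2⟩
        have h9 := sq9 (N j₀) hN0.1 hN0.2
        rw [ht]; simp only []
        rw [h]
        nlinarith
    have hsums : (Sn : ℤ) + 3 ≤ ∑ j, (t j)^2 := by
      have hle : ∀ j, ((ε j).val : ℤ) + (if j = j₀ then 3 else 0) ≤ (t j)^2 := by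
        intro j
        by_cases hj : j = j₀
        · subst hj; simpa using hbig
        · simp only [hj, if_false, add_zero]
          rcases hev j with h | h
          · rw [h]; exact sq_nonneg _
          · rw [h, ht]; simp only []
            rw [h]
            exact sq1 (N j)
      have := Finset.sum_le_sum (fun j (_ : j ∈ Finset.univ) => hle j)
      rw [Finset.sum_add_distrib, Finset.sum_ite_eq' Finset.univ j₀ (fun _ => (3:ℤ))] at this
      simp only [Finset.mem_univ, if_true] at this
      have hcast : ∑ j, ((ε j).val : ℤ) = (Sn : ℤ) := by
        rw [hSn]; push_cast; rfl
      linarith [this, hcast.le, hcast.ge]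
    rw [hQ4, hw]
    linarith

/-! ### Per-character limit -/

lemma perChar (R : Matrix (Fin 3) (Fin 3) ℂ) (c : (Fin 3 → Fin 2) × (Fin 3 → Fin 2)) :
    Filter.Tendsto (fun y : ℝ => ((Real.exp (Real.pi * ((w2 c.1 : ℝ)/2) * y) : ℝ) : ℂ) *
      theta 3 (εZ c.1) (εZ c.2) ((I * (y : ℂ)) • EC4 + R) 0) Filter.atTop
      (nhds (limChar R c)) := by
  refine master R (εZ c.1) (εZ c.2)
    (fun j => by unfold εZ; have := (c.1 j).isLt; omega)
    ((w2 c.1 : ℝ)/2) (by positivity) (MM c.1) ?_ ?_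
  · intro N hN
    have h2 := (Finset.mem_filter.1 hN).2
    rw [h2]
    push_cast
    ring
  · intro N hN
    have h := gap c.1 N hN
    have : ((2 * (w2 c.1 : ℤ) + 1 : ℤ) : ℝ) ≤ ((Q4 (εZ c.1) N : ℤ) : ℝ) := by exact_mod_cast h
    push_cast at this ⊢
    linarith

/-- The index set of even characteristics. -/
def SS : Finset ((Fin 3 → Fin 2) × (Fin 3 → Fin 2)) :=
  Finset.univ.filter (fun c => (∑ j, (c.1 j).val * (c.2 j).val) % 2 = 0)

lemma sum_w2 : ∑ c ∈ SS, w2 c.1 = 32 := by decide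

noncomputable def Lval (R : Matrix (Fin 3) (Fin 3) ℂ) : ℂ := ∏ c ∈ SS, limChar R c

lemma main_tendsto (R : Matrix (Fin 3) (Fin 3) ℂ) :
    Filter.Tendsto (fun y : ℝ => ((Real.exp (16 * Real.pi * y) : ℝ) : ℂ) *
      thetaNull3 ((I * (y : ℂ)) • EC4 + R)) Filter.atTop (nhds (Lval R)) := by
  have h := tendsto_finset_prod SS (fun c (_ : c ∈ SS) => perChar R c)
  refine h.congr fun y => ?_
  rw [Finset.prod_mul_distrib]
  have hθ : thetaNull3 ((I * (y : ℂ)) • EC4 + R) =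
      ∏ c ∈ SS, theta 3 (εZ c.1) (εZ c.2) ((I * (y : ℂ)) • EC4 + R) 0 := rfl
  have hcoef : (∏ c ∈ SS, ((Real.exp (Real.pi * ((w2 c.1 : ℝ)/2) * y) : ℝ) : ℂ)) =
      ((Real.exp (16 * Real.pi * y) : ℝ) : ℂ) := by
    rw [← Complex.ofReal_prod]
    congr 1
    rw [← Real.exp_sum]
    congr 1
    have : ∀ c ∈ SS, Real.pi * ((w2 c.1 : ℝ)/2) * y = (Real.pi * y / 2) * (w2 c.1 : ℝ) := by
      intro c _; ring
    rw [Finset.sum_congr rfl this, ← Finset.mul_sum]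
    have hs : ∑ c ∈ SS, (w2 c.1 : ℝ) = 32 := by
      rw [← Nat.cast_sum, sum_w2]
      norm_num
    rw [hs]
    ring
  rw [hθ, hcoef]

/-! ### Eventual membership in the Siegel upper half space -/

lemma EC4_entry_im (y : ℝ) (R : Matrix (Fin 3) (Fin 3) ℂ) (j k : Fin 3) :
    (((I * (y : ℂ)) • EC4 + R) j k).im = y * (EC4 j k).re + (R j k).im := by
  have : ((I * (y : ℂ)) • EC4 + R) j k = I * (y : ℂ) * EC4 j k + R j k := rfl
  rw [this]
  have hreal : (EC4 j k).im = 0 := by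
    fin_cases j <;> fin_cases k <;> norm_num [EC4, Matrix.vecHead, Matrix.vecTail]
  simp [Complex.add_im, Complex.mul_im, Complex.mul_re, hreal]

lemma siegel (R : Matrix (Fin 3) (Fin 3) ℂ) (hR : R.IsSymm) :
    ∀ᶠ y : ℝ in Filter.atTop, SiegelUpper 3 ((I * (y : ℂ)) • EC4 + R) := by
  filter_upwards [Filter.eventually_gt_atTop (KR R)] with y hy
  have hEsym : ∀ j k : Fin 3, EC4 j k = EC4 k j := by
    intro j k
    fin_cases j <;> fin_cases k <;> norm_num [EC4, Matrix.vecHead, Matrix.vecTail]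
  constructor
  · -- symmetry
    ext j k
    show ((I * (y : ℂ)) • EC4 + R) k j = ((I * (y : ℂ)) • EC4 + R) j k
    have h1 : ((I * (y : ℂ)) • EC4 + R) k j = I * (y : ℂ) * EC4 k j + R k j := rfl
    have h2 : ((I * (y : ℂ)) • EC4 + R) j k = I * (y : ℂ) * EC4 j k + R j k := rfl
    rw [h1, h2, hEsym j k, hR.apply j k]
  · refine Matrix.posDef_iff_dotProduct_mulVec.2 ⟨?_, ?_⟩
    · -- hermitian
      ext j k
      show (starRingEnd ℝ) ((Matrix.of fun j k => (((I * (y : ℂ)) • EC4 + R) j k).im) k j) = _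
      simp only [Matrix.of_apply, starRingEnd_apply, star_trivial]
      rw [EC4_entry_im, EC4_entry_im, hEsym k j]
      have : (R k j).im = (R j k).im := by rw [hR.apply k j]
      rw [this]
    · -- positivity
      intro x hx
      obtain ⟨j₀, hj₀⟩ := Function.ne_iff.1 hx
      have hssq : 0 < ∑ j, (x j)^2 := by
        have h1 : 0 < (x j₀)^2 := (sq_nonneg _).lt_of_ne (Ne.symm (pow_ne_zero 2 hj₀))
        have h2 : (x j₀)^2 ≤ ∑ j, (x j)^2 :=
          Finset.single_le_sum (f := fun j => (x j)^2) (fun j _ => sq_nonneg _)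
            (Finset.mem_univ j₀)
        linarith
      have hquad : star x ⬝ᵥ ((Matrix.of fun j k => (((I * (y : ℂ)) • EC4 + R) j k).im) *ᵥ x)
          = ∑ j, ∑ k, x j * x k * (y * (EC4 j k).re + (R j k).im) := by
        simp only [dotProduct, Matrix.mulVec, star_trivial, Matrix.of_apply,
          dotProduct, Pi.star_apply, star_trivial]
        simp only [Fin.sum_univ_three, EC4_entry_im]
        ring
      rw [hquad]
      have hsplit : ∑ j, ∑ k, x j * x k * (y * (EC4 j k).re + (R j k).im) =
          y * (∑ j, ∑ k, x j * x k * (EC4 j k).re) +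
          ∑ j, ∑ k, x j * x k * (R j k).im := by
        simp only [Fin.sum_univ_three]
        ring
      rw [hsplit]
      have hE : ∑ j, ∑ k, x j * x k * (EC4 j k).re =
          (∑ j, (x j)^2) + (x 0 + x 1 + x 2)^2 := by
        simp only [Fin.sum_univ_three]
        norm_num [EC4, Matrix.vecHead, Matrix.vecTail, Matrix.cons_val_two]
        ring
      have hbound := double_sum_bound (fun j k => (R j k).im) x
      have hKR : (∑ j, ∑ k, |(R j k).im|) = KR R := rfl
      rw [hKR] at hbound
      have habs := (abs_le.1 hbound).1
      rw [hE]
      have hy0 : 0 < y := lt_of_le_of_lt (KR_nonneg R) hy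
      nlinarith [mul_pos (sub_pos.2 hy) hssq,
        mul_nonneg hy0.le (sq_nonneg (x 0 + x 1 + x 2))]

/-! ### Evaluation of the limits -/

noncomputable def Ef (R : Matrix (Fin 3) (Fin 3) ℂ) : ℂ :=
  Complex.exp (↑Real.pi * I * ((R 0 0 + R 1 1 + R 2 2)/4))
noncomputable def Af (R : Matrix (Fin 3) (Fin 3) ℂ) : ℂ :=
  Complex.exp (↑Real.pi * I * ((R 0 1 - R 0 2 - R 1 2)/2))
noncomputable def Bf (R : Matrix (Fin 3) (Fin 3) ℂ) : ℂ :=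
  Complex.exp (↑Real.pi * I * ((R 0 2 - R 0 1 - R 1 2)/2))
noncomputable def Cf (R : Matrix (Fin 3) (Fin 3) ℂ) : ℂ :=
  Complex.exp (↑Real.pi * I * ((R 1 2 - R 0 1 - R 0 2)/2))

lemma exp_add_pi (a : ℂ) : Complex.exp (a + ↑Real.pi * I) = -Complex.exp a := by
  rw [Complex.exp_add, Complex.exp_pi_mul_I]
  ring

lemma exp_sub_pi (a : ℂ) : Complex.exp (a - ↑Real.pi * I) = -Complex.exp a := by
  rw [sub_eq_add_neg, Complex.exp_add, Complex.exp_neg, Complex.exp_pi_mul_I]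
  norm_num

lemma lim000_ne (R : Matrix (Fin 3) (Fin 3) ℂ) (δ : Fin 3 → Fin 2) :
    limChar R (![0,0,0], δ) ≠ 0 := by
  unfold limChar
  rw [show MM ![0,0,0] = {![0,0,0]} from by decide, Finset.sum_singleton]
  exact Complex.exp_ne_zero _

lemma limP_100 (R : Matrix (Fin 3) (Fin 3) ℂ) (δ : Fin 3 → Fin 2) (hd : (δ 0).val = 0) :
    limChar R (![1,0,0], δ) ≠ 0 := by
  unfold limChar
  rw [show MM ![1,0,0] = {![0,0,0], ![-1,0,0]} from by decide, Finset.sum_pair (by decide)]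
  have hz : ↑Real.pi * I * (rrC R (εZ ![1,0,0]) ![-1,0,0] + ddC (εZ ![1,0,0]) (εZ δ) ![-1,0,0])
      = ↑Real.pi * I * (rrC R (εZ ![1,0,0]) ![0,0,0] + ddC (εZ ![1,0,0]) (εZ δ) ![0,0,0]) := by
    unfold rrC ddC vc vv εZ
    simp only [Fin.sum_univ_three, Matrix.cons_val_zero, Matrix.cons_val_one, Matrix.head_cons,
      Matrix.cons_val_two, Matrix.tail_cons, Fin.val_zero, Fin.val_one, hd]
    push_cast
    ring
  rw [hz, ← two_mul]
  exact mul_ne_zero two_ne_zero (Complex.exp_ne_zero _)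

lemma limP_010 (R : Matrix (Fin 3) (Fin 3) ℂ) (δ : Fin 3 → Fin 2) (hd : (δ 1).val = 0) :
    limChar R (![0,1,0], δ) ≠ 0 := by
  unfold limChar
  rw [show MM ![0,1,0] = {![0,0,0], ![0,-1,0]} from by decide, Finset.sum_pair (by decide)]
  have hz : ↑Real.pi * I * (rrC R (εZ ![0,1,0]) ![0,-1,0] + ddC (εZ ![0,1,0]) (εZ δ) ![0,-1,0])
      = ↑Real.pi * I * (rrC R (εZ ![0,1,0]) ![0,0,0] + ddC (εZ ![0,1,0]) (εZ δ) ![0,0,0]) := by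
    unfold rrC ddC vc vv εZ
    simp only [Fin.sum_univ_three, Matrix.cons_val_zero, Matrix.cons_val_one, Matrix.head_cons,
      Matrix.cons_val_two, Matrix.tail_cons, Fin.val_zero, Fin.val_one, hd]
    push_cast
    ring
  rw [hz, ← two_mul]
  exact mul_ne_zero two_ne_zero (Complex.exp_ne_zero _)

lemma limP_001 (R : Matrix (Fin 3) (Fin 3) ℂ) (δ : Fin 3 → Fin 2) (hd : (δ 2).val = 0) :
    limChar R (![0,0,1], δ) ≠ 0 := by
  unfold limChar
  rw [show MM ![0,0,1] = {![0,0,0], ![0,0,-1]} from by decide, Finset.sum_pair (by decide)]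
  have hz : ↑Real.pi * I * (rrC R (εZ ![0,0,1]) ![0,0,-1] + ddC (εZ ![0,0,1]) (εZ δ) ![0,0,-1])
      = ↑Real.pi * I * (rrC R (εZ ![0,0,1]) ![0,0,0] + ddC (εZ ![0,0,1]) (εZ δ) ![0,0,0]) := by
    unfold rrC ddC vc vv εZ
    simp only [Fin.sum_univ_three, Matrix.cons_val_zero, Matrix.cons_val_one, Matrix.head_cons,
      Matrix.cons_val_two, Matrix.tail_cons, Fin.val_zero, Fin.val_one, hd]
    push_cast
    ring
  rw [hz, ← two_mul]
  exact mul_ne_zero two_ne_zero (Complex.exp_ne_zero _)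

lemma limP_110 (R : Matrix (Fin 3) (Fin 3) ℂ) (δ : Fin 3 → Fin 2) (hd : (δ 0).val = (δ 1).val) :
    limChar R (![1,1,0], δ) ≠ 0 := by
  unfold limChar
  rw [show MM ![1,1,0] = {![0,-1,0], ![-1,0,0]} from by decide, Finset.sum_pair (by decide)]
  have hz : ↑Real.pi * I * (rrC R (εZ ![1,1,0]) ![-1,0,0] + ddC (εZ ![1,1,0]) (εZ δ) ![-1,0,0])
      = ↑Real.pi * I * (rrC R (εZ ![1,1,0]) ![0,-1,0] + ddC (εZ ![1,1,0]) (εZ δ) ![0,-1,0]) := by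
    unfold rrC ddC vc vv εZ
    simp only [Fin.sum_univ_three, Matrix.cons_val_zero, Matrix.cons_val_one, Matrix.head_cons,
      Matrix.cons_val_two, Matrix.tail_cons, Fin.val_zero, Fin.val_one, hd]
    push_cast
    ring
  rw [hz, ← two_mul]
  exact mul_ne_zero two_ne_zero (Complex.exp_ne_zero _)

lemma limP_101 (R : Matrix (Fin 3) (Fin 3) ℂ) (δ : Fin 3 → Fin 2) (hd : (δ 0).val = (δ 2).val) :
    limChar R (![1,0,1], δ) ≠ 0 := by
  unfold limChar
  rw [show MM ![1,0,1] = {![0,0,-1], ![-1,0,0]} from by decide, Finset.sum_pair (by decide)]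
  have hz : ↑Real.pi * I * (rrC R (εZ ![1,0,1]) ![-1,0,0] + ddC (εZ ![1,0,1]) (εZ δ) ![-1,0,0])
      = ↑Real.pi * I * (rrC R (εZ ![1,0,1]) ![0,0,-1] + ddC (εZ ![1,0,1]) (εZ δ) ![0,0,-1]) := by
    unfold rrC ddC vc vv εZ
    simp only [Fin.sum_univ_three, Matrix.cons_val_zero, Matrix.cons_val_one, Matrix.head_cons,
      Matrix.cons_val_two, Matrix.tail_cons, Fin.val_zero, Fin.val_one, hd]
    push_cast
    ring
  rw [hz, ← two_mul]
  exact mul_ne_zero two_ne_zero (Complex.exp_ne_zero _)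

lemma limP_011 (R : Matrix (Fin 3) (Fin 3) ℂ) (δ : Fin 3 → Fin 2) (hd : (δ 1).val = (δ 2).val) :
    limChar R (![0,1,1], δ) ≠ 0 := by
  unfold limChar
  rw [show MM ![0,1,1] = {![0,0,-1], ![0,-1,0]} from by decide, Finset.sum_pair (by decide)]
  have hz : ↑Real.pi * I * (rrC R (εZ ![0,1,1]) ![0,-1,0] + ddC (εZ ![0,1,1]) (εZ δ) ![0,-1,0])
      = ↑Real.pi * I * (rrC R (εZ ![0,1,1]) ![0,0,-1] + ddC (εZ ![0,1,1]) (εZ δ) ![0,0,-1]) := by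
    unfold rrC ddC vc vv εZ
    simp only [Fin.sum_univ_three, Matrix.cons_val_zero, Matrix.cons_val_one, Matrix.head_cons,
      Matrix.cons_val_two, Matrix.tail_cons, Fin.val_zero, Fin.val_one, hd]
    push_cast
    ring
  rw [hz, ← two_mul]
  exact mul_ne_zero two_ne_zero (Complex.exp_ne_zero _)

lemma lim111_1 (R : Matrix (Fin 3) (Fin 3) ℂ) (hR : R.IsSymm) :
    limChar R (![1,1,1], ![0,0,0]) = 2 * Ef R * (Af R + Bf R + Cf R) := by
  unfold limChar
  rw [show MM ![1,1,1] = {![0,0,-1], ![-1,-1,0], ![0,-1,0], ![-1,0,-1], ![-1,0,0], ![0,-1,-1]}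
    from by decide]
  rw [Finset.sum_insert (by decide), Finset.sum_insert (by decide),
    Finset.sum_insert (by decide), Finset.sum_insert (by decide), Finset.sum_pair (by decide)]
  have t1 : Complex.exp (↑Real.pi * I * (rrC R (εZ ![1,1,1]) ![0,0,-1] + ddC (εZ ![1,1,1]) (εZ ![0,0,0]) ![0,0,-1])) = Ef R * Af R := by
    have hz : ↑Real.pi * I * (rrC R (εZ ![1,1,1]) ![0,0,-1] + ddC (εZ ![1,1,1]) (εZ ![0,0,0]) ![0,0,-1])
        = (↑Real.pi * I * ((R 0 0 + R 1 1 + R 2 2)/4) + ↑Real.pi * I * ((R 0 1 - R 0 2 - R 1 2)/2)) := by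
      unfold rrC ddC vc vv εZ
      simp only [Fin.sum_univ_three, Matrix.cons_val_zero, Matrix.cons_val_one, Matrix.head_cons,
        Matrix.cons_val_two, Matrix.tail_cons, Fin.val_zero, Fin.val_one]
      rw [hR.apply 0 1, hR.apply 0 2, hR.apply 1 2]
      push_cast
      ring
    rw [hz]
    rw [Complex.exp_add]
    rfl
  have t2 : Complex.exp (↑Real.pi * I * (rrC R (εZ ![1,1,1]) ![-1,-1,0] + ddC (εZ ![1,1,1]) (εZ ![0,0,0]) ![-1,-1,0])) = Ef R * Af R := by
    have hz : ↑Real.pi * I * (rrC R (εZ ![1,1,1]) ![-1,-1,0] + ddC (εZ ![1,1,1]) (εZ ![0,0,0]) ![-1,-1,0])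
        = (↑Real.pi * I * ((R 0 0 + R 1 1 + R 2 2)/4) + ↑Real.pi * I * ((R 0 1 - R 0 2 - R 1 2)/2)) := by
      unfold rrC ddC vc vv εZ
      simp only [Fin.sum_univ_three, Matrix.cons_val_zero, Matrix.cons_val_one, Matrix.head_cons,
        Matrix.cons_val_two, Matrix.tail_cons, Fin.val_zero, Fin.val_one]
      rw [hR.apply 0 1, hR.apply 0 2, hR.apply 1 2]
      push_cast
      ring
    rw [hz]
    rw [Complex.exp_add]
    rfl
  have t3 : Complex.exp (↑Real.pi * I * (rrC R (εZ ![1,1,1]) ![0,-1,0] + ddC (εZ ![1,1,1]) (εZ ![0,0,0]) ![0,-1,0])) = Ef R * Bf R := by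
    have hz : ↑Real.pi * I * (rrC R (εZ ![1,1,1]) ![0,-1,0] + ddC (εZ ![1,1,1]) (εZ ![0,0,0]) ![0,-1,0])
        = (↑Real.pi * I * ((R 0 0 + R 1 1 + R 2 2)/4) + ↑Real.pi * I * ((R 0 2 - R 0 1 - R 1 2)/2)) := by
      unfold rrC ddC vc vv εZ
      simp only [Fin.sum_univ_three, Matrix.cons_val_zero, Matrix.cons_val_one, Matrix.head_cons,
        Matrix.cons_val_two, Matrix.tail_cons, Fin.val_zero, Fin.val_one]
      rw [hR.apply 0 1, hR.apply 0 2, hR.apply 1 2]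
      push_cast
      ring
    rw [hz]
    rw [Complex.exp_add]
    rfl
  have t4 : Complex.exp (↑Real.pi * I * (rrC R (εZ ![1,1,1]) ![-1,0,-1] + ddC (εZ ![1,1,1]) (εZ ![0,0,0]) ![-1,0,-1])) = Ef R * Bf R := by
    have hz : ↑Real.pi * I * (rrC R (εZ ![1,1,1]) ![-1,0,-1] + ddC (εZ ![1,1,1]) (εZ ![0,0,0]) ![-1,0,-1])
        = (↑Real.pi * I * ((R 0 0 + R 1 1 + R 2 2)/4) + ↑Real.pi * I * ((R 0 2 - R 0 1 - R 1 2)/2)) := by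
      unfold rrC ddC vc vv εZ
      simp only [Fin.sum_univ_three, Matrix.cons_val_zero, Matrix.cons_val_one, Matrix.head_cons,
        Matrix.cons_val_two, Matrix.tail_cons, Fin.val_zero, Fin.val_one]
      rw [hR.apply 0 1, hR.apply 0 2, hR.apply 1 2]
      push_cast
      ring
    rw [hz]
    rw [Complex.exp_add]
    rfl
  have t5 : Complex.exp (↑Real.pi * I * (rrC R (εZ ![1,1,1]) ![-1,0,0] + ddC (εZ ![1,1,1]) (εZ ![0,0,0]) ![-1,0,0])) = Ef R * Cf R := by
    have hz : ↑Real.pi * I * (rrC R (εZ ![1,1,1]) ![-1,0,0] + ddC (εZ ![1,1,1]) (εZ ![0,0,0]) ![-1,0,0])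
        = (↑Real.pi * I * ((R 0 0 + R 1 1 + R 2 2)/4) + ↑Real.pi * I * ((R 1 2 - R 0 1 - R 0 2)/2)) := by
      unfold rrC ddC vc vv εZ
      simp only [Fin.sum_univ_three, Matrix.cons_val_zero, Matrix.cons_val_one, Matrix.head_cons,
        Matrix.cons_val_two, Matrix.tail_cons, Fin.val_zero, Fin.val_one]
      rw [hR.apply 0 1, hR.apply 0 2, hR.apply 1 2]
      push_cast
      ring
    rw [hz]
    rw [Complex.exp_add]
    rfl
  have t6 : Complex.exp (↑Real.pi * I * (rrC R (εZ ![1,1,1]) ![0,-1,-1] + ddC (εZ ![1,1,1]) (εZ ![0,0,0]) ![0,-1,-1])) = Ef R * Cf R := by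
    have hz : ↑Real.pi * I * (rrC R (εZ ![1,1,1]) ![0,-1,-1] + ddC (εZ ![1,1,1]) (εZ ![0,0,0]) ![0,-1,-1])
        = (↑Real.pi * I * ((R 0 0 + R 1 1 + R 2 2)/4) + ↑Real.pi * I * ((R 1 2 - R 0 1 - R 0 2)/2)) := by
      unfold rrC ddC vc vv εZ
      simp only [Fin.sum_univ_three, Matrix.cons_val_zero, Matrix.cons_val_one, Matrix.head_cons,
        Matrix.cons_val_two, Matrix.tail_cons, Fin.val_zero, Fin.val_one]
      rw [hR.apply 0 1, hR.apply 0 2, hR.apply 1 2]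
      push_cast
      ring
    rw [hz]
    rw [Complex.exp_add]
    rfl
  rw [t1, t2, t3, t4, t5, t6]
  ring

lemma lim111_2 (R : Matrix (Fin 3) (Fin 3) ℂ) (hR : R.IsSymm) :
    limChar R (![1,1,1], ![1,1,0]) = 2 * Ef R * (-Af R + Bf R + Cf R) := by
  unfold limChar
  rw [show MM ![1,1,1] = {![0,0,-1], ![-1,-1,0], ![0,-1,0], ![-1,0,-1], ![-1,0,0], ![0,-1,-1]}
    from by decide]
  rw [Finset.sum_insert (by decide), Finset.sum_insert (by decide),
    Finset.sum_insert (by decide), Finset.sum_insert (by decide), Finset.sum_pair (by decide)]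
  have t1 : Complex.exp (↑Real.pi * I * (rrC R (εZ ![1,1,1]) ![0,0,-1] + ddC (εZ ![1,1,1]) (εZ ![1,1,0]) ![0,0,-1])) = -(Ef R * Af R) := by
    have hz : ↑Real.pi * I * (rrC R (εZ ![1,1,1]) ![0,0,-1] + ddC (εZ ![1,1,1]) (εZ ![1,1,0]) ![0,0,-1])
        = (↑Real.pi * I * ((R 0 0 + R 1 1 + R 2 2)/4) + ↑Real.pi * I * ((R 0 1 - R 0 2 - R 1 2)/2)) + ↑Real.pi * I := by
      unfold rrC ddC vc vv εZ
      simp only [Fin.sum_univ_three, Matrix.cons_val_zero, Matrix.cons_val_one, Matrix.head_cons,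
        Matrix.cons_val_two, Matrix.tail_cons, Fin.val_zero, Fin.val_one]
      rw [hR.apply 0 1, hR.apply 0 2, hR.apply 1 2]
      push_cast
      ring
    rw [hz]
    rw [exp_add_pi, Complex.exp_add]
    rfl
  have t2 : Complex.exp (↑Real.pi * I * (rrC R (εZ ![1,1,1]) ![-1,-1,0] + ddC (εZ ![1,1,1]) (εZ ![1,1,0]) ![-1,-1,0])) = -(Ef R * Af R) := by
    have hz : ↑Real.pi * I * (rrC R (εZ ![1,1,1]) ![-1,-1,0] + ddC (εZ ![1,1,1]) (εZ ![1,1,0]) ![-1,-1,0])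
        = (↑Real.pi * I * ((R 0 0 + R 1 1 + R 2 2)/4) + ↑Real.pi * I * ((R 0 1 - R 0 2 - R 1 2)/2)) - ↑Real.pi * I := by
      unfold rrC ddC vc vv εZ
      simp only [Fin.sum_univ_three, Matrix.cons_val_zero, Matrix.cons_val_one, Matrix.head_cons,
        Matrix.cons_val_two, Matrix.tail_cons, Fin.val_zero, Fin.val_one]
      rw [hR.apply 0 1, hR.apply 0 2, hR.apply 1 2]
      push_cast
      ring
    rw [hz]
    rw [exp_sub_pi, Complex.exp_add]
    rfl
  have t3 : Complex.exp (↑Real.pi * I * (rrC R (εZ ![1,1,1]) ![0,-1,0] + ddC (εZ ![1,1,1]) (εZ ![1,1,0]) ![0,-1,0])) = Ef R * Bf R := by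
    have hz : ↑Real.pi * I * (rrC R (εZ ![1,1,1]) ![0,-1,0] + ddC (εZ ![1,1,1]) (εZ ![1,1,0]) ![0,-1,0])
        = (↑Real.pi * I * ((R 0 0 + R 1 1 + R 2 2)/4) + ↑Real.pi * I * ((R 0 2 - R 0 1 - R 1 2)/2)) := by
      unfold rrC ddC vc vv εZ
      simp only [Fin.sum_univ_three, Matrix.cons_val_zero, Matrix.cons_val_one, Matrix.head_cons,
        Matrix.cons_val_two, Matrix.tail_cons, Fin.val_zero, Fin.val_one]
      rw [hR.apply 0 1, hR.apply 0 2, hR.apply 1 2]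
      push_cast
      ring
    rw [hz]
    rw [Complex.exp_add]
    rfl
  have t4 : Complex.exp (↑Real.pi * I * (rrC R (εZ ![1,1,1]) ![-1,0,-1] + ddC (εZ ![1,1,1]) (εZ ![1,1,0]) ![-1,0,-1])) = Ef R * Bf R := by
    have hz : ↑Real.pi * I * (rrC R (εZ ![1,1,1]) ![-1,0,-1] + ddC (εZ ![1,1,1]) (εZ ![1,1,0]) ![-1,0,-1])
        = (↑Real.pi * I * ((R 0 0 + R 1 1 + R 2 2)/4) + ↑Real.pi * I * ((R 0 2 - R 0 1 - R 1 2)/2)) := by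
      unfold rrC ddC vc vv εZ
      simp only [Fin.sum_univ_three, Matrix.cons_val_zero, Matrix.cons_val_one, Matrix.head_cons,
        Matrix.cons_val_two, Matrix.tail_cons, Fin.val_zero, Fin.val_one]
      rw [hR.apply 0 1, hR.apply 0 2, hR.apply 1 2]
      push_cast
      ring
    rw [hz]
    rw [Complex.exp_add]
    rfl
  have t5 : Complex.exp (↑Real.pi * I * (rrC R (εZ ![1,1,1]) ![-1,0,0] + ddC (εZ ![1,1,1]) (εZ ![1,1,0]) ![-1,0,0])) = Ef R * Cf R := by
    have hz : ↑Real.pi * I * (rrC R (εZ ![1,1,1]) ![-1,0,0] + ddC (εZ ![1,1,1]) (εZ ![1,1,0]) ![-1,0,0])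
        = (↑Real.pi * I * ((R 0 0 + R 1 1 + R 2 2)/4) + ↑Real.pi * I * ((R 1 2 - R 0 1 - R 0 2)/2)) := by
      unfold rrC ddC vc vv εZ
      simp only [Fin.sum_univ_three, Matrix.cons_val_zero, Matrix.cons_val_one, Matrix.head_cons,
        Matrix.cons_val_two, Matrix.tail_cons, Fin.val_zero, Fin.val_one]
      rw [hR.apply 0 1, hR.apply 0 2, hR.apply 1 2]
      push_cast
      ring
    rw [hz]
    rw [Complex.exp_add]
    rfl
  have t6 : Complex.exp (↑Real.pi * I * (rrC R (εZ ![1,1,1]) ![0,-1,-1] + ddC (εZ ![1,1,1]) (εZ ![1,1,0]) ![0,-1,-1])) = Ef R * Cf R := by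
    have hz : ↑Real.pi * I * (rrC R (εZ ![1,1,1]) ![0,-1,-1] + ddC (εZ ![1,1,1]) (εZ ![1,1,0]) ![0,-1,-1])
        = (↑Real.pi * I * ((R 0 0 + R 1 1 + R 2 2)/4) + ↑Real.pi * I * ((R 1 2 - R 0 1 - R 0 2)/2)) := by
      unfold rrC ddC vc vv εZ
      simp only [Fin.sum_univ_three, Matrix.cons_val_zero, Matrix.cons_val_one, Matrix.head_cons,
        Matrix.cons_val_two, Matrix.tail_cons, Fin.val_zero, Fin.val_one]
      rw [hR.apply 0 1, hR.apply 0 2, hR.apply 1 2]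
      push_cast
      ring
    rw [hz]
    rw [Complex.exp_add]
    rfl
  rw [t1, t2, t3, t4, t5, t6]
  ring

lemma lim111_3 (R : Matrix (Fin 3) (Fin 3) ℂ) (hR : R.IsSymm) :
    limChar R (![1,1,1], ![1,0,1]) = 2 * Ef R * (Af R - Bf R + Cf R) := by
  unfold limChar
  rw [show MM ![1,1,1] = {![0,0,-1], ![-1,-1,0], ![0,-1,0], ![-1,0,-1], ![-1,0,0], ![0,-1,-1]}
    from by decide]
  rw [Finset.sum_insert (by decide), Finset.sum_insert (by decide),
    Finset.sum_insert (by decide), Finset.sum_insert (by decide), Finset.sum_pair (by decide)]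
  have t1 : Complex.exp (↑Real.pi * I * (rrC R (εZ ![1,1,1]) ![0,0,-1] + ddC (εZ ![1,1,1]) (εZ ![1,0,1]) ![0,0,-1])) = Ef R * Af R := by
    have hz : ↑Real.pi * I * (rrC R (εZ ![1,1,1]) ![0,0,-1] + ddC (εZ ![1,1,1]) (εZ ![1,0,1]) ![0,0,-1])
        = (↑Real.pi * I * ((R 0 0 + R 1 1 + R 2 2)/4) + ↑Real.pi * I * ((R 0 1 - R 0 2 - R 1 2)/2)) := by
      unfold rrC ddC vc vv εZ
      simp only [Fin.sum_univ_three, Matrix.cons_val_zero, Matrix.cons_val_one, Matrix.head_cons,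
        Matrix.cons_val_two, Matrix.tail_cons, Fin.val_zero, Fin.val_one]
      rw [hR.apply 0 1, hR.apply 0 2, hR.apply 1 2]
      push_cast
      ring
    rw [hz]
    rw [Complex.exp_add]
    rfl
  have t2 : Complex.exp (↑Real.pi * I * (rrC R (εZ ![1,1,1]) ![-1,-1,0] + ddC (εZ ![1,1,1]) (εZ ![1,0,1]) ![-1,-1,0])) = Ef R * Af R := by
    have hz : ↑Real.pi * I * (rrC R (εZ ![1,1,1]) ![-1,-1,0] + ddC (εZ ![1,1,1]) (εZ ![1,0,1]) ![-1,-1,0])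
        = (↑Real.pi * I * ((R 0 0 + R 1 1 + R 2 2)/4) + ↑Real.pi * I * ((R 0 1 - R 0 2 - R 1 2)/2)) := by
      unfold rrC ddC vc vv εZ
      simp only [Fin.sum_univ_three, Matrix.cons_val_zero, Matrix.cons_val_one, Matrix.head_cons,
        Matrix.cons_val_two, Matrix.tail_cons, Fin.val_zero, Fin.val_one]
      rw [hR.apply 0 1, hR.apply 0 2, hR.apply 1 2]
      push_cast
      ring
    rw [hz]
    rw [Complex.exp_add]
    rfl
  have t3 : Complex.exp (↑Real.pi * I * (rrC R (εZ ![1,1,1]) ![0,-1,0] + ddC (εZ ![1,1,1]) (εZ ![1,0,1]) ![0,-1,0])) = -(Ef R * Bf R) := by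
    have hz : ↑Real.pi * I * (rrC R (εZ ![1,1,1]) ![0,-1,0] + ddC (εZ ![1,1,1]) (εZ ![1,0,1]) ![0,-1,0])
        = (↑Real.pi * I * ((R 0 0 + R 1 1 + R 2 2)/4) + ↑Real.pi * I * ((R 0 2 - R 0 1 - R 1 2)/2)) + ↑Real.pi * I := by
      unfold rrC ddC vc vv εZ
      simp only [Fin.sum_univ_three, Matrix.cons_val_zero, Matrix.cons_val_one, Matrix.head_cons,
        Matrix.cons_val_two, Matrix.tail_cons, Fin.val_zero, Fin.val_one]
      rw [hR.apply 0 1, hR.apply 0 2, hR.apply 1 2]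
      push_cast
      ring
    rw [hz]
    rw [exp_add_pi, Complex.exp_add]
    rfl
  have t4 : Complex.exp (↑Real.pi * I * (rrC R (εZ ![1,1,1]) ![-1,0,-1] + ddC (εZ ![1,1,1]) (εZ ![1,0,1]) ![-1,0,-1])) = -(Ef R * Bf R) := by
    have hz : ↑Real.pi * I * (rrC R (εZ ![1,1,1]) ![-1,0,-1] + ddC (εZ ![1,1,1]) (εZ ![1,0,1]) ![-1,0,-1])
        = (↑Real.pi * I * ((R 0 0 + R 1 1 + R 2 2)/4) + ↑Real.pi * I * ((R 0 2 - R 0 1 - R 1 2)/2)) - ↑Real.pi * I := by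
      unfold rrC ddC vc vv εZ
      simp only [Fin.sum_univ_three, Matrix.cons_val_zero, Matrix.cons_val_one, Matrix.head_cons,
        Matrix.cons_val_two, Matrix.tail_cons, Fin.val_zero, Fin.val_one]
      rw [hR.apply 0 1, hR.apply 0 2, hR.apply 1 2]
      push_cast
      ring
    rw [hz]
    rw [exp_sub_pi, Complex.exp_add]
    rfl
  have t5 : Complex.exp (↑Real.pi * I * (rrC R (εZ ![1,1,1]) ![-1,0,0] + ddC (εZ ![1,1,1]) (εZ ![1,0,1]) ![-1,0,0])) = Ef R * Cf R := by
    have hz : ↑Real.pi * I * (rrC R (εZ ![1,1,1]) ![-1,0,0] + ddC (εZ ![1,1,1]) (εZ ![1,0,1]) ![-1,0,0])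
        = (↑Real.pi * I * ((R 0 0 + R 1 1 + R 2 2)/4) + ↑Real.pi * I * ((R 1 2 - R 0 1 - R 0 2)/2)) := by
      unfold rrC ddC vc vv εZ
      simp only [Fin.sum_univ_three, Matrix.cons_val_zero, Matrix.cons_val_one, Matrix.head_cons,
        Matrix.cons_val_two, Matrix.tail_cons, Fin.val_zero, Fin.val_one]
      rw [hR.apply 0 1, hR.apply 0 2, hR.apply 1 2]
      push_cast
      ring
    rw [hz]
    rw [Complex.exp_add]
    rfl
  have t6 : Complex.exp (↑Real.pi * I * (rrC R (εZ ![1,1,1]) ![0,-1,-1] + ddC (εZ ![1,1,1]) (εZ ![1,0,1]) ![0,-1,-1])) = Ef R * Cf R := by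
    have hz : ↑Real.pi * I * (rrC R (εZ ![1,1,1]) ![0,-1,-1] + ddC (εZ ![1,1,1]) (εZ ![1,0,1]) ![0,-1,-1])
        = (↑Real.pi * I * ((R 0 0 + R 1 1 + R 2 2)/4) + ↑Real.pi * I * ((R 1 2 - R 0 1 - R 0 2)/2)) := by
      unfold rrC ddC vc vv εZ
      simp only [Fin.sum_univ_three, Matrix.cons_val_zero, Matrix.cons_val_one, Matrix.head_cons,
        Matrix.cons_val_two, Matrix.tail_cons, Fin.val_zero, Fin.val_one]
      rw [hR.apply 0 1, hR.apply 0 2, hR.apply 1 2]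
      push_cast
      ring
    rw [hz]
    rw [Complex.exp_add]
    rfl
  rw [t1, t2, t3, t4, t5, t6]
  ring

lemma lim111_4 (R : Matrix (Fin 3) (Fin 3) ℂ) (hR : R.IsSymm) :
    limChar R (![1,1,1], ![0,1,1]) = 2 * Ef R * (Af R + Bf R - Cf R) := by
  unfold limChar
  rw [show MM ![1,1,1] = {![0,0,-1], ![-1,-1,0], ![0,-1,0], ![-1,0,-1], ![-1,0,0], ![0,-1,-1]}
    from by decide]
  rw [Finset.sum_insert (by decide), Finset.sum_insert (by decide),
    Finset.sum_insert (by decide), Finset.sum_insert (by decide), Finset.sum_pair (by decide)]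
  have t1 : Complex.exp (↑Real.pi * I * (rrC R (εZ ![1,1,1]) ![0,0,-1] + ddC (εZ ![1,1,1]) (εZ ![0,1,1]) ![0,0,-1])) = Ef R * Af R := by
    have hz : ↑Real.pi * I * (rrC R (εZ ![1,1,1]) ![0,0,-1] + ddC (εZ ![1,1,1]) (εZ ![0,1,1]) ![0,0,-1])
        = (↑Real.pi * I * ((R 0 0 + R 1 1 + R 2 2)/4) + ↑Real.pi * I * ((R 0 1 - R 0 2 - R 1 2)/2)) := by
      unfold rrC ddC vc vv εZ
      simp only [Fin.sum_univ_three, Matrix.cons_val_zero, Matrix.cons_val_one, Matrix.head_cons,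
        Matrix.cons_val_two, Matrix.tail_cons, Fin.val_zero, Fin.val_one]
      rw [hR.apply 0 1, hR.apply 0 2, hR.apply 1 2]
      push_cast
      ring
    rw [hz]
    rw [Complex.exp_add]
    rfl
  have t2 : Complex.exp (↑Real.pi * I * (rrC R (εZ ![1,1,1]) ![-1,-1,0] + ddC (εZ ![1,1,1]) (εZ ![0,1,1]) ![-1,-1,0])) = Ef R * Af R := by
    have hz : ↑Real.pi * I * (rrC R (εZ ![1,1,1]) ![-1,-1,0] + ddC (εZ ![1,1,1]) (εZ ![0,1,1]) ![-1,-1,0])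
        = (↑Real.pi * I * ((R 0 0 + R 1 1 + R 2 2)/4) + ↑Real.pi * I * ((R 0 1 - R 0 2 - R 1 2)/2)) := by
      unfold rrC ddC vc vv εZ
      simp only [Fin.sum_univ_three, Matrix.cons_val_zero, Matrix.cons_val_one, Matrix.head_cons,
        Matrix.cons_val_two, Matrix.tail_cons, Fin.val_zero, Fin.val_one]
      rw [hR.apply 0 1, hR.apply 0 2, hR.apply 1 2]
      push_cast
      ring
    rw [hz]
    rw [Complex.exp_add]
    rfl
  have t3 : Complex.exp (↑Real.pi * I * (rrC R (εZ ![1,1,1]) ![0,-1,0] + ddC (εZ ![1,1,1]) (εZ ![0,1,1]) ![0,-1,0])) = Ef R * Bf R := by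
    have hz : ↑Real.pi * I * (rrC R (εZ ![1,1,1]) ![0,-1,0] + ddC (εZ ![1,1,1]) (εZ ![0,1,1]) ![0,-1,0])
        = (↑Real.pi * I * ((R 0 0 + R 1 1 + R 2 2)/4) + ↑Real.pi * I * ((R 0 2 - R 0 1 - R 1 2)/2)) := by
      unfold rrC ddC vc vv εZ
      simp only [Fin.sum_univ_three, Matrix.cons_val_zero, Matrix.cons_val_one, Matrix.head_cons,
        Matrix.cons_val_two, Matrix.tail_cons, Fin.val_zero, Fin.val_one]
      rw [hR.apply 0 1, hR.apply 0 2, hR.apply 1 2]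
      push_cast
      ring
    rw [hz]
    rw [Complex.exp_add]
    rfl
  have t4 : Complex.exp (↑Real.pi * I * (rrC R (εZ ![1,1,1]) ![-1,0,-1] + ddC (εZ ![1,1,1]) (εZ ![0,1,1]) ![-1,0,-1])) = Ef R * Bf R := by
    have hz : ↑Real.pi * I * (rrC R (εZ ![1,1,1]) ![-1,0,-1] + ddC (εZ ![1,1,1]) (εZ ![0,1,1]) ![-1,0,-1])
        = (↑Real.pi * I * ((R 0 0 + R 1 1 + R 2 2)/4) + ↑Real.pi * I * ((R 0 2 - R 0 1 - R 1 2)/2)) := by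
      unfold rrC ddC vc vv εZ
      simp only [Fin.sum_univ_three, Matrix.cons_val_zero, Matrix.cons_val_one, Matrix.head_cons,
        Matrix.cons_val_two, Matrix.tail_cons, Fin.val_zero, Fin.val_one]
      rw [hR.apply 0 1, hR.apply 0 2, hR.apply 1 2]
      push_cast
      ring
    rw [hz]
    rw [Complex.exp_add]
    rfl
  have t5 : Complex.exp (↑Real.pi * I * (rrC R (εZ ![1,1,1]) ![-1,0,0] + ddC (εZ ![1,1,1]) (εZ ![0,1,1]) ![-1,0,0])) = -(Ef R * Cf R) := by
    have hz : ↑Real.pi * I * (rrC R (εZ ![1,1,1]) ![-1,0,0] + ddC (εZ ![1,1,1]) (εZ ![0,1,1]) ![-1,0,0])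
        = (↑Real.pi * I * ((R 0 0 + R 1 1 + R 2 2)/4) + ↑Real.pi * I * ((R 1 2 - R 0 1 - R 0 2)/2)) + ↑Real.pi * I := by
      unfold rrC ddC vc vv εZ
      simp only [Fin.sum_univ_three, Matrix.cons_val_zero, Matrix.cons_val_one, Matrix.head_cons,
        Matrix.cons_val_two, Matrix.tail_cons, Fin.val_zero, Fin.val_one]
      rw [hR.apply 0 1, hR.apply 0 2, hR.apply 1 2]
      push_cast
      ring
    rw [hz]
    rw [exp_add_pi, Complex.exp_add]
    rfl
  have t6 : Complex.exp (↑Real.pi * I * (rrC R (εZ ![1,1,1]) ![0,-1,-1] + ddC (εZ ![1,1,1]) (εZ ![0,1,1]) ![0,-1,-1])) = -(Ef R * Cf R) := by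
    have hz : ↑Real.pi * I * (rrC R (εZ ![1,1,1]) ![0,-1,-1] + ddC (εZ ![1,1,1]) (εZ ![0,1,1]) ![0,-1,-1])
        = (↑Real.pi * I * ((R 0 0 + R 1 1 + R 2 2)/4) + ↑Real.pi * I * ((R 1 2 - R 0 1 - R 0 2)/2)) - ↑Real.pi * I := by
      unfold rrC ddC vc vv εZ
      simp only [Fin.sum_univ_three, Matrix.cons_val_zero, Matrix.cons_val_one, Matrix.head_cons,
        Matrix.cons_val_two, Matrix.tail_cons, Fin.val_zero, Fin.val_one]
      rw [hR.apply 0 1, hR.apply 0 2, hR.apply 1 2]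
      push_cast
      ring
    rw [hz]
    rw [exp_sub_pi, Complex.exp_add]
    rfl
  rw [t1, t2, t3, t4, t5, t6]
  ring

lemma limChar_cases (R : Matrix (Fin 3) (Fin 3) ℂ) (hR : R.IsSymm)
    (c : (Fin 3 → Fin 2) × (Fin 3 → Fin 2)) (hc : c ∈ SS) (h0 : limChar R c = 0) :
    Af R + Bf R + Cf R = 0 ∨ -Af R + Bf R + Cf R = 0 ∨
      Af R - Bf R + Cf R = 0 ∨ Af R + Bf R - Cf R = 0 := by
  have hpar := (Finset.mem_filter.1 hc).2
  have hfun1 : c.1 = ![c.1 0, c.1 1, c.1 2] := by funext j; fin_cases j <;> rfl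
  have hfun2 : c.2 = ![c.2 0, c.2 1, c.2 2] := by funext j; fin_cases j <;> rfl
  have hceq : c = (![c.1 0, c.1 1, c.1 2], c.2) := by rw [← hfun1]
  rw [hceq] at h0 hpar
  simp only [Fin.sum_univ_three] at hpar
  have hfin : ∀ i : Fin 2, i = 0 ∨ i = 1 := by decide
  have hv : ∀ i : Fin 2, i.val = 0 ∨ i.val = 1 := by decide
  rcases hfin (c.1 0) with e0 | e0 <;> rcases hfin (c.1 1) with e1 | e1 <;>
    rcases hfin (c.1 2) with e2 | e2 <;> rw [e0, e1, e2] at h0 hpar <;>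
    simp only [Matrix.cons_val_zero, Matrix.cons_val_one, Matrix.head_cons,
      Matrix.cons_val_two, Matrix.tail_cons, Fin.isValue, Fin.val_zero, Fin.val_one,
      zero_mul, one_mul, zero_add, add_zero] at hpar h0
  -- ε = (0,0,0)
  · exact absurd h0 (lim000_ne R c.2)
  -- ε = (0,0,1)
  · refine absurd h0 (limP_001 R c.2 ?_)
    rcases hv (c.2 2) with h | h
    · exact h
    · rw [h] at hpar; omega
  -- ε = (0,1,0)
  · refine absurd h0 (limP_010 R c.2 ?_)
    rcases hv (c.2 1) with h | h
    · exact h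
    · rw [h] at hpar; omega
  -- ε = (0,1,1)
  · refine absurd h0 (limP_011 R c.2 ?_)
    rcases hv (c.2 1) with h | h <;> rcases hv (c.2 2) with h' | h' <;>
      rw [h, h'] at hpar ⊢ <;> omega
  -- ε = (1,0,0)
  · refine absurd h0 (limP_100 R c.2 ?_)
    rcases hv (c.2 0) with h | h
    · exact h
    · rw [h] at hpar; omega
  -- ε = (1,0,1)
  · refine absurd h0 (limP_101 R c.2 ?_)
    rcases hv (c.2 0) with h | h <;> rcases hv (c.2 2) with h' | h' <;>
      rw [h, h'] at hpar ⊢ <;> omega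
  -- ε = (1,1,0)
  · refine absurd h0 (limP_110 R c.2 ?_)
    rcases hv (c.2 0) with h | h <;> rcases hv (c.2 1) with h' | h' <;>
      rw [h, h'] at hpar ⊢ <;> omega
  -- ε = (1,1,1)
  · have hd0 : ∀ i : Fin 2, i.val = 0 → i = 0 := by decide
    have hd1 : ∀ i : Fin 2, i.val = 1 → i = 1 := by decide
    rcases hv (c.2 0) with d0 | d0 <;> rcases hv (c.2 1) with d1 | d1 <;>
      rcases hv (c.2 2) with d2 | d2 <;> rw [d0, d1, d2] at hpar <;>
      [skip; skip; skip; skip; skip; skip; skip; skip] <;> first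
      | (exfalso; omega)
      | skip
    · -- δ = (0,0,0)
      rw [hfun2, hd0 _ d0, hd0 _ d1, hd0 _ d2] at h0
      rw [lim111_1 R hR] at h0
      rcases mul_eq_zero.1 h0 with h | h
      · exact absurd h (mul_ne_zero two_ne_zero (Complex.exp_ne_zero _))
      · exact Or.inl h
    · -- δ = (0,1,1)
      rw [hfun2, hd0 _ d0, hd1 _ d1, hd1 _ d2] at h0
      rw [lim111_4 R hR] at h0
      rcases mul_eq_zero.1 h0 with h | h
      · exact absurd h (mul_ne_zero two_ne_zero (Complex.exp_ne_zero _))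
      · exact Or.inr (Or.inr (Or.inr h))
    · -- δ = (1,0,1)
      rw [hfun2, hd1 _ d0, hd0 _ d1, hd1 _ d2] at h0
      rw [lim111_3 R hR] at h0
      rcases mul_eq_zero.1 h0 with h | h
      · exact absurd h (mul_ne_zero two_ne_zero (Complex.exp_ne_zero _))
      · exact Or.inr (Or.inr (Or.inl h))
    · -- δ = (1,1,0)
      rw [hfun2, hd1 _ d0, hd1 _ d1, hd0 _ d2] at h0
      rw [lim111_2 R hR] at h0
      rcases mul_eq_zero.1 h0 with h | h
      · exact absurd h (mul_ne_zero two_ne_zero (Complex.exp_ne_zero _))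
      · exact Or.inr (Or.inl h)

lemma cases_to_L (R : Matrix (Fin 3) (Fin 3) ℂ) (hR : R.IsSymm)
    (h : Af R + Bf R + Cf R = 0 ∨ -Af R + Bf R + Cf R = 0 ∨
      Af R - Bf R + Cf R = 0 ∨ Af R + Bf R - Cf R = 0) : Lval R = 0 := by
  unfold Lval
  rw [Finset.prod_eq_zero_iff]
  rcases h with h | h | h | h
  · exact ⟨(![1,1,1], ![0,0,0]), by decide, by rw [lim111_1 R hR, h]; ring⟩
  · exact ⟨(![1,1,1], ![1,1,0]), by decide, by rw [lim111_2 R hR, h]; ring⟩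
  · exact ⟨(![1,1,1], ![1,0,1]), by decide, by rw [lim111_3 R hR, h]; ring⟩
  · exact ⟨(![1,1,1], ![0,1,1]), by decide, by rw [lim111_4 R hR, h]; ring⟩

lemma quartic_iff (R : Matrix (Fin 3) (Fin 3) ℂ) :
    (1 - St1 R - St2 R) * (St2 R - St1 R - 1) * (St1 R - St2 R - 1) *
      (St1 R + St2 R + 1) = 0 ↔
    (Af R + Bf R + Cf R = 0 ∨ -Af R + Bf R + Cf R = 0 ∨
      Af R - Bf R + Cf R = 0 ∨ Af R + Bf R - Cf R = 0) := by
  have hA : Af R = Cf R * St1 R := by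
    unfold Af Cf St1
    rw [← Complex.exp_add]
    congr 1
    ring
  have hB : Bf R = Cf R * St2 R := by
    unfold Bf Cf St2
    rw [← Complex.exp_add]
    congr 1
    ring
  have hC : Cf R ≠ 0 := Complex.exp_ne_zero _
  constructor
  · intro h
    rcases mul_eq_zero.1 h with h' | h4
    · rcases mul_eq_zero.1 h' with h'' | h3
      · rcases mul_eq_zero.1 h'' with h1 | h2
        · refine Or.inr (Or.inr (Or.inr ?_))
          linear_combination hA + hB - Cf R * h1
        · refine Or.inr (Or.inr (Or.inl ?_))
          linear_combination hA - hB - Cf R * h2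
      · refine Or.inr (Or.inl ?_)
        linear_combination -hA + hB - Cf R * h3
    · exact Or.inl (by linear_combination hA + hB + Cf R * h4)
  · intro h
    rcases h with h | h | h | h
    · have hf : St1 R + St2 R + 1 = 0 :=
        (mul_eq_zero.1 (show Cf R * (St1 R + St2 R + 1) = 0 by
          linear_combination h - hA - hB)).resolve_left hC
      rw [hf]
      ring
    · have hf : St1 R - St2 R - 1 = 0 :=
        (mul_eq_zero.1 (show Cf R * (St1 R - St2 R - 1) = 0 by
          linear_combination -h - hA + hB)).resolve_left hC
      rw [hf]
      ring
    · have hf : St2 R - St1 R - 1 = 0 :=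
        (mul_eq_zero.1 (show Cf R * (St2 R - St1 R - 1) = 0 by
          linear_combination -h + hA - hB)).resolve_left hC
      rw [hf]
      ring
    · have hf : 1 - St1 R - St2 R = 0 :=
        (mul_eq_zero.1 (show Cf R * (1 - St1 R - St2 R) = 0 by
          linear_combination -h + hA + hB)).resolve_left hC
      rw [hf]
      ring

end Stmt10

/-- Lowest order behavior of the theta-null along the cone `σ_{C₄}`. -/
theorem stmt_10 (R : Matrix (Fin 3) (Fin 3) ℂ) (hR : R.IsSymm) :
    (∀ᶠ y : ℝ in Filter.atTop, SiegelUpper 3 ((I * (y : ℂ)) • EC4 + R)) ∧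
    ∃ L : ℂ,
      Filter.Tendsto
        (fun y : ℝ => (Real.exp (16 * Real.pi * y) : ℂ) *
          thetaNull3 ((I * (y : ℂ)) • EC4 + R))
        Filter.atTop (nhds L) ∧
      (L = 0 ↔
        (1 - St1 R - St2 R) * (St2 R - St1 R - 1) * (St1 R - St2 R - 1) *
          (St1 R + St2 R + 1) = 0) := by
  refine ⟨Stmt10.siegel R hR, Stmt10.Lval R, Stmt10.main_tendsto R, ?_, ?_⟩
  · intro hL
    unfold Stmt10.Lval at hL
    obtain ⟨c, hcS, hc0⟩ := Finset.prod_eq_zero_iff.1 hL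
    exact (Stmt10.quartic_iff R).2 (Stmt10.limChar_cases R hR c hcS hc0)
  · intro hq
    exact Stmt10.cases_to_L R hR ((Stmt10.quartic_iff R).1 hq)
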